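/- No rainbow K_r-saturated graph (r ≥ 4) contains two nonadjacent vertices both of degree exactly r−2. Consequently, among the vertices of degree exactly r−2, at most one pair can exist, and any two of them are adjacent. -/

import Mathlib

open SimpleGraph

/-- A proper edge coloring: edges sharing a vertex get distinct colors. -/
def IsProperEdgeColoring {V : Type*} {α : Type*} (G : SimpleGraph V) (c : Sym2 V → α) : Prop :=
  ∀ e ∈ G.edgeSet, ∀ f ∈ G.edgeSet, e ≠ f → (∃ x, x ∈ e ∧ x ∈ f) → c e ≠ c f

/-- A rainbow copy of `H` in `G` under the coloring `c`: an injective homomorphism whose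
edge images receive pairwise distinct colors. -/
def HasRainbowCopy {W V : Type*} {α : Type*} (H : SimpleGraph W) (G : SimpleGraph V)
    (c : Sym2 V → α) : Prop :=
  ∃ f : H →g G, Function.Injective f ∧
    ∀ e ∈ H.edgeSet, ∀ e' ∈ H.edgeSet, e ≠ e' → c (Sym2.map f e) ≠ c (Sym2.map f e')

/-- The graph `G` with the extra edge `xy`. -/
def addEdge {V : Type*} (G : SimpleGraph V) (x y : V) : SimpleGraph V :=
  G ⊔ SimpleGraph.fromEdgeSet {s(x, y)}

/-- `G` is rainbow `H`-saturated. -/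
def RainbowSaturated {V W : Type*} (G : SimpleGraph V) (H : SimpleGraph W) : Prop :=
  (∃ c : Sym2 V → ℕ, IsProperEdgeColoring G c ∧ ¬ HasRainbowCopy H G c) ∧
  ∀ x y : V, x ≠ y → ¬ G.Adj x y →
    ∀ c : Sym2 V → ℕ, IsProperEdgeColoring (addEdge G x y) c →
      HasRainbowCopy H (addEdge G x y) c

/-- The rainbow saturation number: the least number of edges of an `n`-vertex
rainbow `H`-saturated graph. -/
noncomputable def rainbowSatNum {W : Type*} (n : ℕ) (H : SimpleGraph W) : ℕ :=
  sInf {m | ∃ G : SimpleGraph (Fin n), RainbowSaturated G H ∧ G.edgeSet.ncard = m}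

theorem stmt17 {V : Type*} (r : ℕ) (hr : 4 ≤ r) (G : SimpleGraph V)
    (hG : RainbowSaturated G (⊤ : SimpleGraph (Fin r))) :
    ∀ x y : V, x ≠ y → (G.neighborSet x).ncard = r - 2 →
      (G.neighborSet y).ncard = r - 2 → G.Adj x y := by
  classical
  intro x y hxy hdx hdy
  by_contra hnadj
  obtain ⟨⟨c, hcp, hcr⟩, hsat⟩ := hG
  have hfx : (G.neighborSet x).Finite := by
    by_contra h
    rw [Set.Infinite.ncard h] at hdx; omega
  have hfy : (G.neighborSet y).Finite := by
    by_contra h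
    rw [Set.Infinite.ncard h] at hdy; omega
  have hufin : (G.neighborSet x ∪ G.neighborSet y).Finite := hfx.union hfy
  obtain ⟨ι, hι⟩ : ∃ ι : V → ℕ, Set.InjOn ι (G.neighborSet x ∪ G.neighborSet y) := by
    refine ⟨fun v => if h : v ∈ hufin.toFinset then (hufin.toFinset.equivFin ⟨v, h⟩ : ℕ) else 0, ?_⟩
    intro a ha b hb hab
    have ha' : a ∈ hufin.toFinset := hufin.mem_toFinset.mpr ha
    have hb' : b ∈ hufin.toFinset := hufin.mem_toFinset.mpr hb
    simp only [dif_pos ha', dif_pos hb'] at hab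
    have h2 := hufin.toFinset.equivFin.injective (Fin.ext hab)
    exact congrArg Subtype.val h2
  have haddadj : ∀ a b : V, (addEdge G x y).Adj a b ↔ G.Adj a b ∨ (s(a, b) = s(x, y) ∧ a ≠ b) := by
    intro a b
    simp [addEdge, fromEdgeSet_adj, sup_adj]
  have haddedge : (addEdge G x y).edgeSet = insert s(x, y) G.edgeSet := by
    rw [addEdge, edgeSet_sup, edgeSet_fromEdgeSet]
    have h1 : ({s(x, y)} : Set (Sym2 V)) \ {e : Sym2 V | e.IsDiag} = {s(x, y)} := by
      ext e
      simp only [Set.mem_diff, Set.mem_singleton_iff, Set.mem_setOf_eq]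
      constructor
      · exact fun h => h.1
      · rintro rfl; exact ⟨rfl, by simp [hxy]⟩
    rw [show (Sym2.diagSet : Set (Sym2 V)) = {e : Sym2 V | e.IsDiag} from rfl, h1, Set.union_comm, ← Set.insert_eq]
  have hGedge : ∀ e ∈ G.edgeSet, ∀ z, z ∈ e → ∃ w, G.Adj z w ∧ e = s(z, w) := by
    intro e he z hz
    refine ⟨Sym2.Mem.other hz, ?_, (Sym2.other_spec hz).symm⟩
    have h1 := Sym2.other_spec hz
    rw [← h1] at he
    exact (G.mem_edgeSet).mp he
  -- The modified coloring, parametrized by the color K of the new edge.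
  let col : ℕ → Sym2 V → ℕ := fun K e =>
    if e = s(x, y) then K
    else if h : x ∈ e then 4 * ι (Sym2.Mem.other h) + 3
    else if h : y ∈ e then 4 * ι (Sym2.Mem.other h) + 5
    else 2 * c e
  have hcol_def : ∀ K e, col K e =
      if e = s(x, y) then K
      else if h : x ∈ e then 4 * ι (Sym2.Mem.other h) + 3
      else if h : y ∈ e then 4 * ι (Sym2.Mem.other h) + 5
      else 2 * c e := fun K e => rfl
  have hcol_new : ∀ K, col K s(x, y) = K := by intro K; rw [hcol_def]; simp
  have hcol_x : ∀ K w, G.Adj x w → col K s(x, w) = 4 * ι w + 3 := by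
    intro K w hw
    have hwy : w ≠ y := by rintro rfl; exact hnadj hw
    have hne : s(x, w) ≠ s(x, y) := fun h => hwy (Sym2.congr_right.mp h)
    have hx : x ∈ s(x, w) := Sym2.mem_mk_left x w
    rw [hcol_def, if_neg hne, dif_pos hx, Sym2.congr_right.mp (Sym2.other_spec hx)]
  have hcol_y : ∀ K w, G.Adj y w → col K s(y, w) = 4 * ι w + 5 := by
    intro K w hw
    have hwx : w ≠ x := by rintro rfl; exact hnadj hw.symm
    have hxe : x ∉ s(y, w) := by
      rw [Sym2.mem_iff]
      rintro (h | h)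
      · exact hxy h
      · exact hwx h.symm
    have hne : s(y, w) ≠ s(x, y) := by
      intro h; apply hxe; rw [h]; exact Sym2.mem_mk_left x y
    have hy : y ∈ s(y, w) := Sym2.mem_mk_left y w
    rw [hcol_def, if_neg hne, dif_neg hxe, dif_pos hy,
      Sym2.congr_right.mp (Sym2.other_spec hy)]
  have hcol_plain : ∀ K e, x ∉ e → y ∉ e → col K e = 2 * c e := by
    intro K e hxe hye
    have hne : e ≠ s(x, y) := by rintro rfl; exact hxe (Sym2.mem_mk_left x y)
    rw [hcol_def, if_neg hne, dif_neg hxe, dif_neg hye]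
  have hclass : ∀ K, ∀ e ∈ G.edgeSet,
      (∃ w, G.Adj x w ∧ e = s(x, w) ∧ col K e = 4 * ι w + 3) ∨
      (∃ w, G.Adj y w ∧ e = s(y, w) ∧ col K e = 4 * ι w + 5) ∨
      (x ∉ e ∧ y ∉ e ∧ col K e = 2 * c e) := by
    intro K e he
    by_cases hxe : x ∈ e
    · obtain ⟨w, hw, rfl⟩ := hGedge e he x hxe
      exact Or.inl ⟨w, hw, rfl, hcol_x K w hw⟩
    · by_cases hye : y ∈ e
      · obtain ⟨w, hw, rfl⟩ := hGedge e he y hye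
        exact Or.inr (Or.inl ⟨w, hw, rfl, hcol_y K w hw⟩)
      · exact Or.inr (Or.inr ⟨hxe, hye, hcol_plain K e hxe hye⟩)
  have hproper : ∀ K, (K % 2 = 0 ∨ K = 1) → IsProperEdgeColoring (addEdge G x y) (col K) := by
    intro K hK
    have main : ∀ f ∈ G.edgeSet, (∃ z, z ∈ s(x, y) ∧ z ∈ f) → col K s(x, y) ≠ col K f := by
      rintro f hf ⟨z, hz1, hz2⟩
      rw [hcol_new]
      rcases hclass K f hf with ⟨w, hw, rfl, hc⟩ | ⟨w, hw, rfl, hc⟩ | ⟨hxf, hyf, hc⟩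
      · rw [hc]; omega
      · rw [hc]; omega
      · rcases Sym2.mem_iff.mp hz1 with rfl | rfl
        · exact absurd hz2 hxf
        · exact absurd hz2 hyf
    intro e he f hf hef hshare
    rw [haddedge, Set.mem_insert_iff] at he hf
    rcases he with rfl | he
    · rcases hf with rfl | hf
      · exact absurd rfl hef
      · exact main f hf hshare
    · rcases hf with rfl | hf
      · obtain ⟨z, h1, h2⟩ := hshare
        exact (main e he ⟨z, h2, h1⟩).symm
      · obtain ⟨z, hz1, hz2⟩ := hshare
        rcases hclass K e he with ⟨w, hw, rfl, hce⟩ | ⟨w, hw, rfl, hce⟩ | ⟨hxe, hye, hce⟩ <;>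
          rcases hclass K f hf with ⟨w', hw', rfl, hcf⟩ | ⟨w', hw', rfl, hcf⟩ | ⟨hxf, hyf, hcf⟩
        · have hww' : w ≠ w' := by rintro rfl; exact hef rfl
          have hne : ι w ≠ ι w' := fun h => hww'
            (hι (Set.mem_union_left _ ((G.mem_neighborSet x w).mpr hw))
              (Set.mem_union_left _ ((G.mem_neighborSet x w').mpr hw')) h)
          rw [hce, hcf]; omega
        · rw [hce, hcf]; omega
        · rw [hce, hcf]; omega
        · rw [hce, hcf]; omega
        · have hww' : w ≠ w' := by rintro rfl; exact hef rfl
          have hne : ι w ≠ ι w' := fun h => hww'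
            (hι (Set.mem_union_right _ ((G.mem_neighborSet y w).mpr hw))
              (Set.mem_union_right _ ((G.mem_neighborSet y w').mpr hw')) h)
          rw [hce, hcf]; omega
        · rw [hce, hcf]; omega
        · rw [hce, hcf]; omega
        · rw [hce, hcf]; omega
        · have := hcp e he f hf hef ⟨z, hz1, hz2⟩
          rw [hce, hcf]; omega
  -- structure of an injective hom hitting both x and y
  have himg : ∀ (f : (⊤ : SimpleGraph (Fin r)) →g addEdge G x y), Function.Injective f →
      ∀ a b : Fin r, f a = x → f b = y → ∀ i, i ≠ a → i ≠ b →
      G.Adj x (f i) ∧ G.Adj y (f i) := by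
    intro f hinj a b hfa hfb i hia hib
    have hfix : f i ≠ x := fun h => hia (hinj (h.trans hfa.symm))
    have hfiy : f i ≠ y := fun h => hib (hinj (h.trans hfb.symm))
    constructor
    · have hadj := f.map_adj ((top_adj a i).mpr (Ne.symm hia))
      rw [hfa, haddadj] at hadj
      rcases hadj with h | ⟨hp, _⟩
      · exact h
      · exact absurd (Sym2.congr_right.mp hp) hfiy
    · have hadj := f.map_adj ((top_adj b i).mpr (Ne.symm hib))
      rw [hfb, haddadj] at hadj
      rcases hadj with h | ⟨hp, _⟩
      · exact h
      · have hm : f i ∈ s(x, y) := by rw [← hp]; exact Sym2.mem_mk_right y (f i)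
        rcases Sym2.mem_iff.mp hm with h | h
        · exact absurd h hfix
        · exact absurd h hfiy
  have himadj : ∀ (f : (⊤ : SimpleGraph (Fin r)) →g addEdge G x y), ∀ i j : Fin r,
      i ≠ j → f i ≠ x → f i ≠ y → G.Adj (f i) (f j) := by
    intro f i j hij hfix hfiy
    have hadj := f.map_adj ((top_adj i j).mpr hij)
    rw [haddadj] at hadj
    rcases hadj with h | ⟨hp, _⟩
    · exact h
    · have hm : f i ∈ s(x, y) := by rw [← hp]; exact Sym2.mem_mk_left _ _
      rcases Sym2.mem_iff.mp hm with h | h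
      · exact absurd h hfix
      · exact absurd h hfiy
  -- if the image misses one of x, y then we get a rainbow copy in G itself
  have hcaseb : ∀ (K : ℕ) (f : (⊤ : SimpleGraph (Fin r)) →g addEdge G x y),
      Function.Injective f → (¬ ∃ a b : Fin r, f a = x ∧ f b = y) →
      (∀ e ∈ (⊤ : SimpleGraph (Fin r)).edgeSet, ∀ e' ∈ (⊤ : SimpleGraph (Fin r)).edgeSet,
        e ≠ e' → col K (Sym2.map f e) ≠ col K (Sym2.map f e')) → False := by
    intro K f hinj hnab hrain
    have hmiss : ∀ i, f i ≠ x ∧ f i ≠ y := by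
      intro i
      constructor
      · intro hfix
        have hny : ∀ b, f b ≠ y := fun b hb => hnab ⟨i, b, hfix, hb⟩
        have hmem : ∀ j, j ≠ i → f j ∈ G.neighborSet x := by
          intro j hj
          have hadj := f.map_adj ((top_adj i j).mpr (Ne.symm hj))
          rw [hfix, haddadj] at hadj
          rcases hadj with h | ⟨hp, _⟩
          · exact (G.mem_neighborSet x (f j)).mpr h
          · exact absurd (Sym2.congr_right.mp hp) (hny j)
        have hsub : (f '' ↑(Finset.univ \ {i} : Finset (Fin r))) ⊆ G.neighborSet x := by
          rintro _ ⟨j, hj, rfl⟩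
          simp only [Finset.coe_sdiff, Finset.coe_univ, Set.mem_diff, Set.mem_univ, true_and,
            Finset.coe_singleton, Set.mem_singleton_iff] at hj
          exact hmem j hj
        have h1 : (f '' ↑(Finset.univ \ {i} : Finset (Fin r))).ncard = r - 1 := by
          rw [Set.ncard_image_of_injOn hinj.injOn, Set.ncard_coe_finset,
            Finset.card_sdiff_of_subset (Finset.subset_univ _), Finset.card_univ, Fintype.card_fin,
            Finset.card_singleton]
        have h2 := Set.ncard_le_ncard hsub hfx
        rw [h1, hdx] at h2
        omega
      · intro hfiy
        have hnx : ∀ b, f b ≠ x := fun b hb => hnab ⟨b, i, hb, hfiy⟩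
        have hmem : ∀ j, j ≠ i → f j ∈ G.neighborSet y := by
          intro j hj
          have hadj := f.map_adj ((top_adj i j).mpr (Ne.symm hj))
          rw [hfiy, haddadj] at hadj
          rcases hadj with h | ⟨hp, _⟩
          · exact (G.mem_neighborSet y (f j)).mpr h
          · have hm : f j ∈ s(x, y) := by rw [← hp]; exact Sym2.mem_mk_right _ _
            rcases Sym2.mem_iff.mp hm with h | h
            · exact absurd h (hnx j)
            · exact absurd (hinj (h.trans hfiy.symm)) hj
        have hsub : (f '' ↑(Finset.univ \ {i} : Finset (Fin r))) ⊆ G.neighborSet y := by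
          rintro _ ⟨j, hj, rfl⟩
          simp only [Finset.coe_sdiff, Finset.coe_univ, Set.mem_diff, Set.mem_univ, true_and,
            Finset.coe_singleton, Set.mem_singleton_iff] at hj
          exact hmem j hj
        have h1 : (f '' ↑(Finset.univ \ {i} : Finset (Fin r))).ncard = r - 1 := by
          rw [Set.ncard_image_of_injOn hinj.injOn, Set.ncard_coe_finset,
            Finset.card_sdiff_of_subset (Finset.subset_univ _), Finset.card_univ, Fintype.card_fin,
            Finset.card_singleton]
        have h2 := Set.ncard_le_ncard hsub hfy
        rw [h1, hdy] at h2
        omega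
    have hGadj : ∀ i j : Fin r, i ≠ j → G.Adj (f i) (f j) :=
      fun i j hij => himadj f i j hij (hmiss i).1 (hmiss i).2
    apply hcr
    refine ⟨⟨f, fun {i j} h => hGadj i j ((top_adj i j).mp h)⟩, hinj, ?_⟩
    intro e he e' he' hne
    have h1 := hrain e he e' he' hne
    have key : ∀ e₀ ∈ (⊤ : SimpleGraph (Fin r)).edgeSet,
        col K (Sym2.map f e₀) = 2 * c (Sym2.map f e₀) := by
      intro e₀ he₀
      induction e₀ using Sym2.ind with
      | _ i j =>
        rw [Sym2.map_pair_eq]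
        apply hcol_plain
        · intro hx'
          rcases Sym2.mem_iff.mp hx' with h | h
          · exact (hmiss i).1 h.symm
          · exact (hmiss j).1 h.symm
        · intro hy'
          rcases Sym2.mem_iff.mp hy' with h | h
          · exact (hmiss i).2 h.symm
          · exact (hmiss j).2 h.symm
    rw [key e he, key e' he'] at h1
    intro h2
    have h3 : c (Sym2.map f e) = c (Sym2.map f e') := h2
    omega
  -- main case split
  by_cases hA : ∃ u v : V, G.Adj u v ∧ G.Adj x u ∧ G.Adj y u ∧ G.Adj x v ∧ G.Adj y v
  · obtain ⟨u, v, huv, hxu, hyu, hxv, hyv⟩ := hA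
    obtain ⟨f, hinj, hrain⟩ :=
      hsat x y hxy hnadj (col (2 * c s(u, v))) (hproper _ (Or.inl (by omega)))
    by_cases hab : ∃ a b : Fin r, f a = x ∧ f b = y
    · obtain ⟨a, b, hfa, hfb⟩ := hab
      have hane : a ≠ b := by rintro rfl; exact hxy (hfa.symm.trans hfb)
      have hsub : (f '' ↑(Finset.univ \ {a, b} : Finset (Fin r))) ⊆ G.neighborSet x := by
        rintro _ ⟨j, hj, rfl⟩
        simp only [Finset.coe_sdiff, Finset.coe_univ, Set.mem_diff, Set.mem_univ, true_and,
          Finset.coe_insert, Finset.coe_singleton, Set.mem_insert_iff, Set.mem_singleton_iff,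
          not_or] at hj
        exact (G.mem_neighborSet x (f j)).mpr (himg f hinj a b hfa hfb j hj.1 hj.2).1
      have hT : (f '' ↑(Finset.univ \ {a, b} : Finset (Fin r))).ncard = r - 2 := by
        rw [Set.ncard_image_of_injOn hinj.injOn, Set.ncard_coe_finset,
          Finset.card_sdiff_of_subset (Finset.subset_univ _), Finset.card_univ, Fintype.card_fin,
          Finset.card_insert_of_notMem (by simpa using hane), Finset.card_singleton]
      have hEq : (f '' ↑(Finset.univ \ {a, b} : Finset (Fin r))) = G.neighborSet x :=
        Set.eq_of_subset_of_ncard_le hsub (by rw [hT, hdx]) hfx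
      obtain ⟨iu, _, hfiu⟩ : ∃ i ∈ (↑(Finset.univ \ {a, b} : Finset (Fin r)) : Set (Fin r)), f i = u := by
        have := hEq ▸ ((G.mem_neighborSet x u).mpr hxu)
        exact this
      obtain ⟨iv, _, hfiv⟩ : ∃ i ∈ (↑(Finset.univ \ {a, b} : Finset (Fin r)) : Set (Fin r)), f i = v := by
        have := hEq ▸ ((G.mem_neighborSet x v).mpr hxv)
        exact this
      have hij : iu ≠ iv := by
        rintro rfl
        exact huv.ne (hfiu.symm.trans hfiv)
      have he1 : s(a, b) ∈ (⊤ : SimpleGraph (Fin r)).edgeSet := by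
        rw [SimpleGraph.mem_edgeSet, top_adj]; exact hane
      have he2 : s(iu, iv) ∈ (⊤ : SimpleGraph (Fin r)).edgeSet := by
        rw [SimpleGraph.mem_edgeSet, top_adj]; exact hij
      have hnee : s(a, b) ≠ s(iu, iv) := by
        intro h
        have h' : Sym2.map f s(a, b) = Sym2.map f s(iu, iv) := by rw [h]
        rw [Sym2.map_pair_eq, Sym2.map_pair_eq, hfa, hfb, hfiu, hfiv] at h'
        have hx' : x ∈ s(u, v) := by rw [← h']; exact Sym2.mem_mk_left _ _
        rcases Sym2.mem_iff.mp hx' with h'' | h''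
        · exact hxu.ne h''
        · exact hxv.ne h''
      have hcon := hrain s(a, b) he1 s(iu, iv) he2 hnee
      rw [Sym2.map_pair_eq, Sym2.map_pair_eq, hfa, hfb, hfiu, hfiv] at hcon
      apply hcon
      rw [hcol_new]
      rw [hcol_plain]
      · intro hx'
        rcases Sym2.mem_iff.mp hx' with h | h
        · exact hxu.ne h
        · exact hxv.ne h
      · intro hy'
        rcases Sym2.mem_iff.mp hy' with h | h
        · exact hyu.ne h
        · exact hyv.ne h
    · exact hcaseb _ f hinj hab hrain
  · obtain ⟨f, hinj, hrain⟩ := hsat x y hxy hnadj (col 1) (hproper 1 (Or.inr rfl))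
    by_cases hab : ∃ a b : Fin r, f a = x ∧ f b = y
    · obtain ⟨a, b, hfa, hfb⟩ := hab
      have hane : a ≠ b := by rintro rfl; exact hxy (hfa.symm.trans hfb)
      have hcard2 : 1 < (Finset.univ \ {a, b} : Finset (Fin r)).card := by
        rw [Finset.card_sdiff_of_subset (Finset.subset_univ _), Finset.card_univ, Fintype.card_fin]
        have h2 : ({a, b} : Finset (Fin r)).card ≤ 2 := by
          apply le_trans (Finset.card_insert_le a {b})
          simp
        omega
      obtain ⟨i, hi, j, hj, hij⟩ := Finset.one_lt_card.mp hcard2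
      simp only [Finset.mem_sdiff, Finset.mem_univ, true_and, Finset.mem_insert,
        Finset.mem_singleton, not_or] at hi hj
      have h1 := himg f hinj a b hfa hfb i hi.1 hi.2
      have h2 := himg f hinj a b hfa hfb j hj.1 hj.2
      have hadjij : G.Adj (f i) (f j) := himadj f i j hij h1.1.ne' h1.2.ne'
      exact hA ⟨f i, f j, hadjij, h1.1, h1.2, h2.1, h2.2⟩
    · exact hcaseb _ f hinj hab hrain
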